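/- arXiv:2206.14044 — 2 statements merged into one kernel-verified Lean document; each statement's English description precedes it below -/
import Mathlib

section
/- Let (P_λ)_{λ∈Λ} be a transversal family, a ∈ ℝ^n, λ₀ ∈ Λ and δ₀ > 0 with B̄_{2δ₀}(λ₀) ⊂ Λ. Let 𝒱_m denote the family of all m-dimensional coordinate planes of ℝ^l (spans of m vectors of the standard basis). Then there exist c > 0 and s₀ > 0 such that for every λ ∈ B̄_{δ₀}(λ₀), every 0 < s < s₀ and every r > 0: ∪_{V∈𝒱_m} (B̄_r(a) ∩ L_V(a,λ,s/c) ∖ {a}) ⊂ X(a,r,λ,s) ⊂ ∪_{V∈𝒱_m} (B̄_r(a) ∩ L_V(a,λ,c·s) ∖ {a}). -/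
open MeasureTheory Metric Set Filter
open scoped ENNReal NNReal Topology

noncomputable section

abbrev Euc (n : ℕ) : Type := EuclideanSpace ℝ (Fin n)

namespace Slicing

variable {n m l : ℕ}

/-- The map `T_{x x'}(λ) = (P_λ(x) - P_λ(x'))/|x - x'|`. -/
def transMap (P : Euc n → Euc l → Euc m) (x x' : Euc n) (lam : Euc l) : Euc m :=
  ‖x - x'‖⁻¹ • (P x lam - P x' lam)

/-- The `m`-dimensional Jacobian `J D = √det(D ∘ Dᵀ)` of a linear map `D : ℝˡ → ℝᵐ`. -/
def jacobian (D : Euc l →L[ℝ] Euc m) : ℝ :=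
  Real.sqrt (LinearMap.det
    ((D.comp (ContinuousLinearMap.adjoint D) : Euc m →L[ℝ] Euc m) : Euc m →ₗ[ℝ] Euc m))

/-- A transversal family of maps `(P_λ)_{λ ∈ Λ}` in the sense of Definition 3.4. -/
structure IsTransversalFamily (Λ : Set (Euc l)) (P : Euc n → Euc l → Euc m) : Prop where
  isOpen : IsOpen Λ
  isBounded : Bornology.IsBounded Λ
  continuousOn : ContinuousOn (fun q : Euc n × Euc l => P q.1 q.2) (Set.univ ×ˢ Λ)
  contDiffOn : ∀ x : Euc n, ContDiffOn ℝ 2 (P x) Λ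
  derivBound : ∀ j : ℕ, j = 1 ∨ j = 2 → ∃ C : ℝ, ∀ x : Euc n, ∀ lam ∈ Λ,
    ‖iteratedFDeriv ℝ j (P x) lam‖ ≤ C
  transversality : ∃ C' : ℝ, 0 < C' ∧ ∀ x x' : Euc n, x ≠ x' → ∀ lam ∈ Λ,
    ‖transMap P x x' lam‖ ≤ C' → C' ≤ jacobian (fderiv ℝ (transMap P x x') lam)
  transDerivBound : ∃ C'' : ℝ, ∀ x x' : Euc n, x ≠ x' → ∀ lam ∈ Λ,
    ‖fderiv ℝ (transMap P x x') lam‖ ≤ C'' ∧ ‖iteratedFDeriv ℝ 2 (transMap P x x') lam‖ ≤ C''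

/-- The cone `X(a,λ,s)`. -/
def coneX (P : Euc n → Euc l → Euc m) (a : Euc n) (lam : Euc l) (s : ℝ) : Set (Euc n) :=
  {x | ‖P x lam - P a lam‖ < s * ‖x - a‖}

/-- The truncated cone `X(a,r,λ,s)`. -/
def coneXr (P : Euc n → Euc l → Euc m) (a : Euc n) (r : ℝ) (lam : Euc l) (s : ℝ) :
    Set (Euc n) :=
  coneX P a lam s ∩ closedBall a r

/-- The cone `L_V(a,λ,s)`. -/
def coneL (P : Euc n → Euc l → Euc m) (V : Submodule ℝ (Euc l)) (a : Euc n) (lam : Euc l)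
    (s : ℝ) : Set (Euc n) :=
  {x | ∃ lam' : Euc l, P x lam' = P a lam' ∧ ‖lam' - lam‖ < s ∧ lam' - lam ∈ V}

/-- `V` is an `m`-dimensional coordinate plane of `ℝˡ`. -/
def IsCoordPlane (m : ℕ) (V : Submodule ℝ (Euc l)) : Prop :=
  ∃ I : Finset (Fin l), I.card = m ∧
    V = Submodule.span ℝ {v : Euc l | ∃ i ∈ I, v = EuclideanSpace.single i (1 : ℝ)}

/-- A countably `m`-rectifiable subset of `ℝⁿ`. -/
def CountablyRectifiable (m : ℕ) (R : Set (Euc n)) : Prop :=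
  ∃ (E : ℕ → Set (Euc m)) (f : ℕ → Euc m → Euc n),
    (∀ i, Bornology.IsBounded (E i)) ∧
    (∀ i, ∃ K : ℝ≥0, LipschitzOnWith K (f i) (E i)) ∧
    R = ⋃ i, f i '' E i

/-- An `m`-rectifiable measure: `μ = θ · (H^m ⌊ R)`. -/
def IsRectifiableMeasure (m : ℕ) (μ : Measure (Euc n)) : Prop :=
  ∃ (R : Set (Euc n)) (θ : Euc n → ℝ), CountablyRectifiable m R ∧ Measurable θ ∧
    μ = (μH[(m : ℝ)].restrict R).withDensity (fun x => ENNReal.ofReal (θ x))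

/-- `S` is an `m`-dimensional `C¹` submanifold of `ℝⁿ`. -/
def IsC1Submanifold (m : ℕ) (S : Set (Euc n)) : Prop :=
  ∀ x ∈ S, ∃ (U : Set (Euc n)) (V : Set (Euc m)) (f : Euc m → Euc n),
    IsOpen U ∧ x ∈ U ∧ IsOpen V ∧ ContDiffOn ℝ 1 f V ∧ Set.InjOn f V ∧
    (∀ y ∈ V, Function.Injective (fderivWithin ℝ f V y)) ∧ S ∩ U = f '' V

/-- `E` is purely `(φ,m)`-unrectifiable. -/
def PurelyUnrectifiable (m : ℕ) (φ : Measure (Euc n)) (E : Set (Euc n)) : Prop :=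
  ∀ S : Set (Euc n), IsC1Submanifold m S → φ (S ∩ E) = 0

/-- `A` is countably `(φ,m)`-rectifiable. -/
def CountablyRectifiableWrt (m : ℕ) (φ : Measure (Euc n)) (A : Set (Euc n)) : Prop :=
  ∃ R : Set (Euc n), CountablyRectifiable m R ∧ φ (A \ R) = 0

/-- Carathéodory's construction from a set function `ζ`, using countable Borel coverings. -/
def carath {X : Type*} [EMetricSpace X] [MeasurableSpace X] (ζ : Set X → ℝ≥0∞) (E : Set X) :
    ℝ≥0∞ :=
  ⨆ (δ : ℝ≥0∞) (_ : 0 < δ), ⨅ (G : ℕ → Set X) (_ : ∀ i, MeasurableSet (G i))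
    (_ : E ⊆ ⋃ i, G i) (_ : ∀ i, EMetric.diam (G i) ≤ δ), ∑' i, ζ (G i)

/-- `L^p` norm of an `ℝ≥0∞`-valued function. -/
def lpNormENN {α : Type*} [MeasurableSpace α] (ν : Measure α) (p : ℝ≥0∞) (f : α → ℝ≥0∞) :
    ℝ≥0∞ :=
  if p = ∞ then essSup f ν else (∫⁻ a, f a ^ p.toReal ∂ν) ^ (1 / p.toReal)

/-- The set function `ζ_p(B) = ‖λ ↦ μ_λ(B)‖_{L^p(Λ)}`. -/
def zetaP (Λ : Set (Euc l)) (μ : Euc l → Measure (Euc n)) (p : ℝ≥0∞) (B : Set (Euc n)) :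
    ℝ≥0∞ :=
  lpNormENN (volume.restrict Λ) p (fun lam => μ lam B)

/-- The measure `𝓘^m_p` obtained from `ζ_p` via Carathéodory's construction. -/
def genIGMeasure (Λ : Set (Euc l)) (μ : Euc l → Measure (Euc n)) (p : ℝ≥0∞) :
    Set (Euc n) → ℝ≥0∞ :=
  carath (zetaP Λ μ p)

/-- Upper Lebesgue integral. -/
def upperLintegral {α : Type*} [MeasurableSpace α] (ν : Measure α) (f : α → ℝ≥0∞) : ℝ≥0∞ :=
  ⨅ (g : α → ℝ≥0∞) (_ : Measurable g) (_ : ∀ a, f a ≤ g a), ∫⁻ a, g a ∂ν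

/-- The set function `ζ̂(B') = ∫*_Λ μ_λ(B'_λ) dλ`. -/
def zetaHat (Λ : Set (Euc l)) (μ : Euc l → Measure (Euc n)) (B' : Set (Euc n × Euc l)) :
    ℝ≥0∞ :=
  upperLintegral (volume.restrict Λ) (fun lam => μ lam {x | (x, lam) ∈ B'})

/-- The measure `𝓘̂_m` on the product, obtained from `ζ̂` via Carathéodory's construction. -/
def hatIG (Λ : Set (Euc l)) (μ : Euc l → Measure (Euc n)) : Set (Euc n × Euc l) → ℝ≥0∞ :=
  carath (zetaHat Λ μ)

/-- A measurable family of (Borel regular outer) measures. -/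
def MeasurableFamily (Λ : Set (Euc l)) (μ : Euc l → Measure (Euc n)) : Prop :=
  ∀ B : Set (Euc n), MeasurableSet B → AEMeasurable (fun lam => μ lam B) (volume.restrict Λ)

/-- `𝓘^m_p` is an integralgeometric measure (Definition 4.1). -/
def IsIntegralgeometric (Λ : Set (Euc l)) (P : Euc n → Euc l → Euc m)
    (μ : Euc l → Measure (Euc n)) : Prop :=
  (∀ᵐ lam ∂(volume.restrict Λ), (μ lam).map (fun x => P x lam) ≪ volume) ∧
  ∃ E : Set (Euc n), MeasurableSet E ∧
    (∀ᵐ lam ∂(volume.restrict Λ), μ lam Eᶜ = 0) ∧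
    (∀ᵐ lam ∂(volume.restrict Λ), ∀ᵐ y ∂((μ lam).map (fun x => P x lam)),
      (E ∩ (fun x => P x lam) ⁻¹' {y}).Finite)

/-- A disintegration `ν = η_y ⊗ Q_♯ν`. -/
def IsDisintegration {X Y : Type*} [MeasurableSpace X] [MeasurableSpace Y] (ν : Measure X)
    (Q : X → Y) (η : Y → Measure X) : Prop :=
  (∀ y, IsProbabilityMeasure (η y)) ∧
  (∀ᵐ y ∂(ν.map Q), η y (Q ⁻¹' {y})ᶜ = 0) ∧
  (∀ B : Set X, MeasurableSet B → Measurable fun y => η y B) ∧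
  (∀ B : Set X, MeasurableSet B → ν B = ∫⁻ y, η y B ∂(ν.map Q))

/-- A `0`-rectifiable measure (a countable sum of nonnegative point masses). -/
def ZeroRectifiable {X : Type*} [MeasurableSpace X] (ν : Measure X) : Prop :=
  ∃ R : Set X, R.Countable ∧ ν Rᶜ = 0

/-- A measure supported on a finite set. -/
def FinitelySupported {X : Type*} [MeasurableSpace X] (ν : Measure X) : Prop :=
  ∃ F : Set X, F.Finite ∧ ν Fᶜ = 0

/-- `ω(m)`, the Lebesgue measure of the unit ball of `ℝᵐ`. -/
def omegaBall (m : ℕ) : ℝ := (volume (Metric.ball (0 : Euc m) 1)).toReal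

/-- The `m`-dimensional upper density `Θ^{*m}(ν, a)`. -/
def upperDensity (m : ℕ) (ν : Measure (Euc n)) (a : Euc n) : ℝ≥0∞ :=
  Filter.limsup
    (fun r : ℝ => ν (closedBall a r) / ENNReal.ofReal (omegaBall m * r ^ m)) (𝓝[>] 0)

/-- `sup_{0<r<δ} (rs)^{-m} φ(E ∩ X(a,r,λ,s))`, then `limsup` as `s → 0⁺`. -/
def coneDensity (P : Euc n → Euc l → Euc m) (φ : Measure (Euc n)) (E : Set (Euc n))
    (a : Euc n) (lam : Euc l) (δ : ℝ) : ℝ≥0∞ :=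
  Filter.limsup (fun s : ℝ =>
    ⨆ (r : ℝ) (_ : r ∈ Set.Ioo (0 : ℝ) δ),
      φ (E ∩ coneXr P a r lam s) / ENNReal.ofReal ((r * s) ^ m)) (𝓝[>] 0)



/-- The Grassmannian of `m`-dimensional linear subspaces of `ℝⁿ`. -/
def Grassmannian (n m : ℕ) : Type :=
  {V : Submodule ℝ (Euc n) // Module.finrank ℝ V = m}

/-- The orthogonal projection `π_V : ℝⁿ → V ⊆ ℝⁿ`. -/
def projG {n m : ℕ} (V : Grassmannian n m) : Euc n →L[ℝ] Euc n :=
  (V.1.subtypeL).comp (Submodule.orthogonalProjection V.1)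

instance {n m : ℕ} : TopologicalSpace (Grassmannian n m) :=
  TopologicalSpace.induced projG inferInstance

instance {n m : ℕ} : MeasurableSpace (Grassmannian n m) := borel _

instance {n m : ℕ} : BorelSpace (Grassmannian n m) := ⟨rfl⟩

/-- The action of an orthogonal transformation on the Grassmannian. -/
def grMap {n m : ℕ} (g : Euc n ≃ₗᵢ[ℝ] Euc n) (V : Grassmannian n m) : Grassmannian n m :=
  ⟨V.1.map (g.toLinearEquiv : Euc n →ₗ[ℝ] Euc n), by
    rw [LinearEquiv.finrank_map_eq g.toLinearEquiv V.1]; exact V.2⟩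

/-- A measure on the Grassmannian is invariant under the action of `O(n)`. -/
def IsONInvariant {n m : ℕ} (γ : Measure (Grassmannian n m)) : Prop :=
  ∀ g : Euc n ≃ₗᵢ[ℝ] Euc n, Measure.map (grMap g) γ = γ

/-- `η_p(B) = ‖V ↦ H^m(π_V(B))‖_{L^p(γ)}`. -/
def etaP {n m : ℕ} (γ : Measure (Grassmannian n m)) (p : ℝ≥0∞) (B : Set (Euc n)) : ℝ≥0∞ :=
  lpNormENN γ p (fun V => μH[(m : ℝ)] (projG V '' B))

/-- Federer's integralgeometric measure `I^m_p`. -/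
def IGMeasure {n m : ℕ} (γ : Measure (Grassmannian n m)) (p : ℝ≥0∞) :
    Set (Euc n) → ℝ≥0∞ :=
  carath (etaP γ p)

/-- `μ_V(B) = ∫_V H^0(B ∩ π_V⁻¹(y)) dH^m(y)`. -/
def muV {n m : ℕ} (V : Grassmannian n m) (B : Set (Euc n)) : ℝ≥0∞ :=
  ∫⁻ y in (V.1 : Set (Euc n)), Measure.count (B ∩ projG V ⁻¹' {y}) ∂μH[(m : ℝ)]



/-- `ζ_p(B) = ‖V ↦ μ_V(B)‖_{L^p(γ)}` for the measures `μ_V`. -/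
def zetaGr {n m : ℕ} (γ : Measure (Grassmannian n m)) (p : ℝ≥0∞) (B : Set (Euc n)) : ℝ≥0∞ :=
  lpNormENN γ p (fun V => muV V B)

/-- The measure `𝓘^m_p` obtained from `ζ_p` via Carathéodory's construction. -/
def IGMeasureAlt {n m : ℕ} (γ : Measure (Grassmannian n m)) (p : ℝ≥0∞) :
    Set (Euc n) → ℝ≥0∞ :=
  carath (zetaGr γ p)




lemma euc_abs_apply_le_norm {m : ℕ} (t : Euc m) (j : Fin m) : |t j| ≤ ‖t‖ := by
  rw [EuclideanSpace.norm_eq, ← Real.sqrt_sq_eq_abs]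
  apply Real.sqrt_le_sqrt
  have h := Finset.single_le_sum (f := fun i => ‖t i‖ ^ 2)
    (fun i _ => by positivity) (Finset.mem_univ j)
  simpa [Real.norm_eq_abs, sq_abs] using h

def iotaF (m l : ℕ) (f : Fin m → Fin l) : Euc m →L[ℝ] Euc l :=
  ∑ j : Fin m, (EuclideanSpace.proj j).smulRight (EuclideanSpace.single (f j) (1 : ℝ))

lemma iotaF_apply {m l : ℕ} (f : Fin m → Fin l) (t : Euc m) :
    iotaF m l f t = ∑ j : Fin m, t j • EuclideanSpace.single (f j) (1 : ℝ) := by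
  simp [iotaF]

lemma norm_iotaF_apply_le {m l : ℕ} (f : Fin m → Fin l) (t : Euc m) :
    ‖iotaF m l f t‖ ≤ m * ‖t‖ := by
  rw [iotaF_apply]
  calc ‖∑ j : Fin m, t j • EuclideanSpace.single (f j) (1 : ℝ)‖
      ≤ ∑ j : Fin m, ‖t j • EuclideanSpace.single (f j) (1 : ℝ)‖ := norm_sum_le _ _
    _ ≤ ∑ _j : Fin m, ‖t‖ := Finset.sum_le_sum (fun j _ => by
        rw [norm_smul, EuclideanSpace.norm_single]
        simpa [Real.norm_eq_abs] using euc_abs_apply_le_norm t j)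
    _ = m * ‖t‖ := by simp [Finset.sum_const, nsmul_eq_mul]

lemma norm_iotaF_le {m l : ℕ} (f : Fin m → Fin l) : ‖iotaF m l f‖ ≤ m :=
  ContinuousLinearMap.opNorm_le_bound _ (by positivity) (norm_iotaF_apply_le f)

lemma iotaF_mem_span {m l : ℕ} (f : Fin m → Fin l) {I : Finset (Fin l)}
    (hf : ∀ j, f j ∈ I) (t : Euc m) :
    iotaF m l f t ∈ Submodule.span ℝ
      {v : Euc l | ∃ i ∈ I, v = EuclideanSpace.single i (1 : ℝ)} := by
  rw [iotaF_apply]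
  exact Submodule.sum_mem _ fun j _ => Submodule.smul_mem _ _
    (Submodule.subset_span ⟨f j, hf j, rfl⟩)

lemma bijective_of_det_ne_zero {m : ℕ} (M : Euc m →L[ℝ] Euc m)
    (h : LinearMap.det (M : Euc m →ₗ[ℝ] Euc m) ≠ 0) : Function.Bijective M := by
  have hc : ((LinearMap.equivOfDetNeZero (M : Euc m →ₗ[ℝ] Euc m) h) : Euc m →ₗ[ℝ] Euc m)
      = (M : Euc m →ₗ[ℝ] Euc m) := LinearEquiv.coe_ofIsUnitDet _
  have hb := (LinearMap.equivOfDetNeZero (M : Euc m →ₗ[ℝ] Euc m) h).bijective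
  have hfun : ⇑(LinearMap.equivOfDetNeZero (M : Euc m →ₗ[ℝ] Euc m) h) = ⇑M :=
    funext fun y => LinearMap.congr_fun hc y
  rwa [hfun] at hb

lemma exists_inv_bound (m : ℕ) (α β : ℝ) (hα : 0 < α) :
    ∃ γ : ℝ, 0 < γ ∧ ∀ M : Euc m →L[ℝ] Euc m, ‖M‖ ≤ β →
      α ≤ |LinearMap.det (M : Euc m →ₗ[ℝ] Euc m)| → ∀ t, γ * ‖t‖ ≤ ‖M t‖ := by
  classical
  set S : Set (Euc m →L[ℝ] Euc m) :=
    {M | ‖M‖ ≤ β ∧ α ≤ |LinearMap.det (M : Euc m →ₗ[ℝ] Euc m)|} with hS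
  have hdet_cont : Continuous fun M : Euc m →L[ℝ] Euc m =>
      LinearMap.det (M : Euc m →ₗ[ℝ] Euc m) := ContinuousLinearMap.continuous_det
  have hSclosed : IsClosed S :=
    (isClosed_le continuous_norm continuous_const).inter
      (isClosed_le continuous_const hdet_cont.abs)
  have hScompact : IsCompact S :=
    (isCompact_closedBall (0 : Euc m →L[ℝ] Euc m) β).of_isClosed_subset hSclosed
      (fun M hM => mem_closedBall_zero_iff.2 hM.1)
  have hunit : ∀ M ∈ S, ∃ u : (Euc m →L[ℝ] Euc m)ˣ, (u : Euc m →L[ℝ] Euc m) = M := by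
    intro M hM
    have hdet : LinearMap.det (M : Euc m →ₗ[ℝ] Euc m) ≠ 0 := by
      intro h0
      have := hM.2
      rw [h0, abs_zero] at this
      exact absurd this (not_le.2 hα)
    have hbij := bijective_of_det_ne_zero M hdet
    let eqv : Euc m ≃ₗ[ℝ] Euc m := LinearEquiv.ofBijective (M : Euc m →ₗ[ℝ] Euc m) hbij
    let ce : Euc m ≃L[ℝ] Euc m := eqv.toContinuousLinearEquiv
    have hce : ∀ z, ce z = M z := fun z => rfl
    have hce' : ∀ z, ce.symm (M z) = z := fun z => by
      rw [← hce z]; exact ce.symm_apply_apply z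
    refine ⟨⟨M, (ce.symm : Euc m →L[ℝ] Euc m), ?_, ?_⟩, rfl⟩
    · exact ContinuousLinearMap.ext fun y => by
        simp only [ContinuousLinearMap.mul_apply, ContinuousLinearMap.one_apply,
          ContinuousLinearMap.coe_coe]
        exact (hce _).symm.trans (ce.apply_symm_apply y)
    · exact ContinuousLinearMap.ext fun y => by
        simp only [ContinuousLinearMap.mul_apply, ContinuousLinearMap.one_apply,
          ContinuousLinearMap.coe_coe]
        exact hce' y
  have hcont : ContinuousOn (fun M : Euc m →L[ℝ] Euc m => ‖Ring.inverse M‖) S := by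
    intro M hM
    obtain ⟨u, hu⟩ := hunit M hM
    have := (NormedRing.inverse_continuousAt u).continuousWithinAt (s := S)
    rw [hu] at this
    exact this.norm
  obtain ⟨γ₀, hγ₀⟩ := hScompact.exists_bound_of_continuousOn hcont
  refine ⟨(max γ₀ 1)⁻¹, by positivity, fun M hMn hMd t => ?_⟩
  have hMS : M ∈ S := ⟨hMn, hMd⟩
  obtain ⟨u, hu⟩ := hunit M hMS
  have hinv : (Ring.inverse M) (M t) = t := by
    rw [← hu, Ring.inverse_unit]
    have h1 : ((u⁻¹ : (Euc m →L[ℝ] Euc m)ˣ) : Euc m →L[ℝ] Euc m) * (u : Euc m →L[ℝ] Euc m)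
        = 1 := u.inv_mul
    calc ((u⁻¹ : (Euc m →L[ℝ] Euc m)ˣ) : Euc m →L[ℝ] Euc m) ((u : Euc m →L[ℝ] Euc m) t)
        = (((u⁻¹ : (Euc m →L[ℝ] Euc m)ˣ) : Euc m →L[ℝ] Euc m)
            * (u : Euc m →L[ℝ] Euc m)) t := (ContinuousLinearMap.mul_apply _ _ _).symm
      _ = t := by rw [h1]; exact ContinuousLinearMap.one_apply t
  have h1 : ‖t‖ ≤ (max γ₀ 1) * ‖M t‖ := by
    calc ‖t‖ = ‖(Ring.inverse M) (M t)‖ := by rw [hinv]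
      _ ≤ ‖Ring.inverse M‖ * ‖M t‖ := ContinuousLinearMap.le_opNorm _ _
      _ ≤ (max γ₀ 1) * ‖M t‖ := by
          apply mul_le_mul_of_nonneg_right _ (norm_nonneg _)
          have h2 := hγ₀ M hMS
          rw [norm_norm] at h2
          exact h2.trans (le_max_left _ _)
  rw [inv_mul_le_iff₀ (by positivity)]
  exact h1


lemma continuous_jacobian {m l : ℕ} : Continuous (jacobian (m := m) (l := l)) := by
  apply Real.continuous_sqrt.comp
  exact ContinuousLinearMap.continuous_det.comp
    (Continuous.clm_comp continuous_id
      ((ContinuousLinearMap.adjoint : (Euc l →L[ℝ] Euc m) ≃ₗᵢ⋆[ℝ] _).continuous))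

lemma surjective_of_jacobian_pos {m l : ℕ} {D : Euc l →L[ℝ] Euc m}
    (h : 0 < jacobian D) : Function.Surjective D := by
  have hdet : 0 < LinearMap.det
      ((D.comp (ContinuousLinearMap.adjoint D) : Euc m →L[ℝ] Euc m) : Euc m →ₗ[ℝ] Euc m) :=
    Real.sqrt_pos.1 h
  have hbij := bijective_of_det_ne_zero _ hdet.ne'
  intro y
  obtain ⟨z, hz⟩ := hbij.2 y
  exact ⟨ContinuousLinearMap.adjoint D z, hz⟩

lemma exists_f_det_ne_zero {m l : ℕ} {D : Euc l →L[ℝ] Euc m}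
    (hD : Function.Surjective D) :
    ∃ f : Fin m → Fin l,
      LinearMap.det ((D.comp (iotaF m l f) : Euc m →L[ℝ] Euc m) : Euc m →ₗ[ℝ] Euc m) ≠ 0 := by
  classical
  set v : Fin l → Euc m := fun i => D (EuclideanSpace.single i (1 : ℝ)) with hv
  have hspan : Submodule.span ℝ (Set.range v) = ⊤ := by
    have h1 : Set.range v = D '' Set.range (fun i : Fin l => EuclideanSpace.single i (1 : ℝ)) := by
      rw [← Set.range_comp]; rfl
    have h2 : (fun i : Fin l => EuclideanSpace.single i (1 : ℝ))
        = ⇑((EuclideanSpace.basisFun (Fin l) ℝ).toBasis) := by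
      funext i
      simp
    rw [h1, ← ContinuousLinearMap.coe_coe, Submodule.span_image, h2, Module.Basis.span_eq, Submodule.map_top,
      LinearMap.range_eq_top]
    exact hD
  obtain ⟨b, hbsub, hbspan, hbli⟩ := exists_linearIndependent ℝ (Set.range v)
  rw [hspan] at hbspan
  have hbfin : b.Finite := hbli.setFinite
  haveI : Fintype b := hbfin.fintype
  let bas : Module.Basis b ℝ (Euc m) := Module.Basis.mk hbli (by rw [Subtype.range_coe, hbspan])
  have hcard : Fintype.card b = m := by
    have := Module.finrank_eq_card_basis bas
    rw [finrank_euclideanSpace_fin] at this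
    omega
  let e : Fin m ≃ b := (Fintype.equivFinOfCardEq hcard).symm
  have hchoice : ∀ w : b, ∃ i : Fin l, v i = (w : Euc m) := fun w => hbsub w.2
  choose g hg using hchoice
  refine ⟨fun j => g (e j), ?_⟩
  set M := (D.comp (iotaF m l (fun j => g (e j))) : Euc m →L[ℝ] Euc m) with hM
  have hMapp : ∀ t : Euc m, M t = ∑ j : Fin m, t j • ((e j : Euc m)) := by
    intro t
    have : M t = D (iotaF m l (fun j => g (e j)) t) := rfl
    rw [this, iotaF_apply, map_sum]
    refine Finset.sum_congr rfl fun j _ => ?_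
    rw [D.map_smul]
    congr 1
    exact hg (e j)
  have hli : LinearIndependent ℝ (fun j : Fin m => ((e j : Euc m))) :=
    hbli.comp e e.injective
  have hinj : Function.Injective M := by
    have hker : ∀ t, M t = 0 → t = 0 := by
      intro t ht
      rw [hMapp] at ht
      have := (Fintype.linearIndependent_iff.1 hli) (fun j => t j) ht
      ext j
      simpa using this j
    intro t u htu
    have : M (t - u) = 0 := by rw [map_sub, htu, sub_self]
    have h0 := hker _ this
    rwa [sub_eq_zero] at h0
  have hbij : Function.Bijective M :=
    ⟨hinj, LinearMap.injective_iff_surjective.1 hinj⟩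
  let eqv : Euc m ≃ₗ[ℝ] Euc m := LinearEquiv.ofBijective (M : Euc m →ₗ[ℝ] Euc m) hbij
  have hdet : IsUnit (LinearMap.det (eqv : Euc m →ₗ[ℝ] Euc m)) := eqv.isUnit_det'
  have : (eqv : Euc m →ₗ[ℝ] Euc m) = (M : Euc m →ₗ[ℝ] Euc m) := rfl
  rw [this] at hdet
  exact hdet.ne_zero

lemma exists_kappa {m l : ℕ} (hm : 0 < m) (hml : m ≤ l) {C' C₂ : ℝ} (hC' : 0 < C')
    (hC₂ : 0 ≤ C₂) :
    ∃ κ : ℝ, 0 < κ ∧ κ ≤ 1 ∧ ∀ D : Euc l →L[ℝ] Euc m, ‖D‖ ≤ C₂ → C' ≤ jacobian D →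
      ∃ f : Fin m → Fin l, ∀ t : Euc m, κ * ‖t‖ ≤ ‖D (iotaF m l f t)‖ := by
  classical
  have hl : 0 < l := lt_of_lt_of_le hm hml
  haveI : Nonempty (Fin l) := ⟨⟨0, hl⟩⟩
  set S : Set (Euc l →L[ℝ] Euc m) := {D | ‖D‖ ≤ C₂ ∧ C' ≤ jacobian D} with hSdef
  by_cases hSne : S.Nonempty
  · set φ : (Euc l →L[ℝ] Euc m) → ℝ := fun D => ∑ f : Fin m → Fin l,
      |LinearMap.det ((D.comp (iotaF m l f) : Euc m →L[ℝ] Euc m) : Euc m →ₗ[ℝ] Euc m)| with hφ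
    have hφcont : Continuous φ := by
      apply continuous_finset_sum
      intro f _
      exact (ContinuousLinearMap.continuous_det.comp
        (Continuous.clm_comp continuous_id continuous_const)).abs
    have hφpos : ∀ D ∈ S, 0 < φ D := by
      intro D hD
      have hsurj : Function.Surjective D :=
        surjective_of_jacobian_pos (lt_of_lt_of_le hC' hD.2)
      obtain ⟨f, hf⟩ := exists_f_det_ne_zero hsurj
      exact Finset.sum_pos' (fun f _ => abs_nonneg _)
        ⟨f, Finset.mem_univ f, abs_pos.2 hf⟩
    have hSclosed : IsClosed S :=
      (isClosed_le continuous_norm continuous_const).inter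
        (isClosed_le continuous_const continuous_jacobian)
    have hScompact : IsCompact S :=
      (isCompact_closedBall (0 : Euc l →L[ℝ] Euc m) C₂).of_isClosed_subset hSclosed
        (fun D hD => mem_closedBall_zero_iff.2 hD.1)
    obtain ⟨D₀, hD₀S, hφmin⟩ := hScompact.exists_isMinOn hSne hφcont.continuousOn
    set δ := φ D₀ with hδ
    have hδ0 : 0 < δ := hφpos D₀ hD₀S
    set N : ℕ := Fintype.card (Fin m → Fin l) with hN
    have hN0 : 0 < (N : ℝ) := by
      have : 0 < N := Fintype.card_pos
      exact_mod_cast this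
    obtain ⟨γ, hγ0, hγ⟩ := exists_inv_bound m (δ / N) (C₂ * m) (div_pos hδ0 hN0)
    refine ⟨min γ 1, lt_min hγ0 one_pos, min_le_right _ _, ?_⟩
    intro D hDn hDj
    have hDS : D ∈ S := ⟨hDn, hDj⟩
    obtain ⟨f, hfmem, hfmax⟩ := Finset.exists_max_image Finset.univ
      (fun f : Fin m → Fin l =>
        |LinearMap.det ((D.comp (iotaF m l f) : Euc m →L[ℝ] Euc m) : Euc m →ₗ[ℝ] Euc m)|)
      ⟨Classical.arbitrary _, Finset.mem_univ _⟩
    have hsum_le : φ D ≤ (N : ℝ) *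
        |LinearMap.det ((D.comp (iotaF m l f) : Euc m →L[ℝ] Euc m) : Euc m →ₗ[ℝ] Euc m)| := by
      rw [hφ]
      calc (∑ f' : Fin m → Fin l, |LinearMap.det
            ((D.comp (iotaF m l f') : Euc m →L[ℝ] Euc m) : Euc m →ₗ[ℝ] Euc m)|)
          ≤ ∑ _f' : Fin m → Fin l, |LinearMap.det
            ((D.comp (iotaF m l f) : Euc m →L[ℝ] Euc m) : Euc m →ₗ[ℝ] Euc m)| :=
            Finset.sum_le_sum (fun f' _ => hfmax f' (Finset.mem_univ f'))
        _ = (N : ℝ) * _ := by rw [Finset.sum_const, Finset.card_univ, nsmul_eq_mul, hN]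
    have hdet_ge : δ / N ≤
        |LinearMap.det ((D.comp (iotaF m l f) : Euc m →L[ℝ] Euc m) : Euc m →ₗ[ℝ] Euc m)| := by
      rw [div_le_iff₀ hN0]
      calc δ ≤ φ D := hφmin hDS
        _ ≤ _ := hsum_le
        _ = _ := mul_comm _ _
    have hMn : ‖(D.comp (iotaF m l f) : Euc m →L[ℝ] Euc m)‖ ≤ C₂ * m := by
      calc ‖(D.comp (iotaF m l f) : Euc m →L[ℝ] Euc m)‖ ≤ ‖D‖ * ‖iotaF m l f‖ :=
            ContinuousLinearMap.opNorm_comp_le _ _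
        _ ≤ C₂ * m := mul_le_mul hDn (norm_iotaF_le f) (norm_nonneg _) hC₂
    refine ⟨f, fun t => ?_⟩
    have := hγ _ hMn hdet_ge t
    calc min γ 1 * ‖t‖ ≤ γ * ‖t‖ :=
          mul_le_mul_of_nonneg_right (min_le_left _ _) (norm_nonneg _)
      _ ≤ ‖(D.comp (iotaF m l f) : Euc m →L[ℝ] Euc m) t‖ := this
      _ = ‖D (iotaF m l f t)‖ := rfl
  · refine ⟨1, one_pos, le_refl _, fun D hDn hDj => absurd ⟨hDn, hDj⟩ (fun h => hSne ⟨D, h⟩)⟩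


set_option maxHeartbeats 2000000 in
/-- Proposition 3.7: comparison between the cones `X(a,r,λ,s)` and
the cones `L_V(a,λ,s)` over coordinate `m`-planes `V`. -/
theorem cone_comparison
    {n m l : ℕ} (hn : 1 ≤ n) (hmn : m ≤ n) (hml : m ≤ l)
    (Λ : Set (Euc l)) (P : Euc n → Euc l → Euc m) (hP : IsTransversalFamily Λ P)
    (a : Euc n) (lam₀ : Euc l) (δ₀ : ℝ) (hδ₀ : 0 < δ₀)
    (hball : closedBall lam₀ (2 * δ₀) ⊆ Λ) :
    ∃ c : ℝ, 0 < c ∧ ∃ s₀ : ℝ, 0 < s₀ ∧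
      ∀ lam ∈ closedBall lam₀ δ₀, ∀ s : ℝ, 0 < s → s < s₀ → ∀ r : ℝ, 0 < r →
        (⋃ (V : Submodule ℝ (Euc l)) (_ : IsCoordPlane m V),
            (closedBall a r ∩ coneL P V a lam (s / c)) \ {a}) ⊆ coneXr P a r lam s ∧
        coneXr P a r lam s ⊆
          ⋃ (V : Submodule ℝ (Euc l)) (_ : IsCoordPlane m V),
            (closedBall a r ∩ coneL P V a lam (c * s)) \ {a} := by
  classical
  rcases Nat.eq_zero_or_pos m with hm0 | hm
  · -- trivial case m = 0
    subst hm0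
    refine ⟨1, one_pos, 1, one_pos, fun lam hlam s hs0 hs1 r hr => ⟨?_, ?_⟩⟩
    · intro x hx
      simp only [Set.mem_iUnion] at hx
      obtain ⟨V, hV, hx⟩ := hx
      obtain ⟨⟨hxball, -⟩, hxa0⟩ := hx
      have hxa : x ≠ a := fun h => hxa0 (by simp [h])
      refine ⟨?_, hxball⟩
      show ‖P x lam - P a lam‖ < s * ‖x - a‖
      have h0 : P x lam - P a lam = 0 := Subsingleton.elim _ _
      rw [h0, norm_zero]
      exact mul_pos hs0 (norm_pos_iff.2 (sub_ne_zero.2 hxa))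
    · intro x hx
      obtain ⟨hxX, hxball⟩ := hx
      have hxlt : ‖P x lam - P a lam‖ < s * ‖x - a‖ := hxX
      have hxa : x ≠ a := by
        rintro rfl
        simp at hxlt
      refine Set.mem_iUnion₂.2 ⟨_, ⟨∅, rfl, rfl⟩,
        ⟨⟨hxball, ⟨lam, Subsingleton.elim _ _, by simpa using mul_pos one_pos hs0, by simp⟩⟩,
          by simp [hxa]⟩⟩
  · -- main case m ≥ 1
    obtain ⟨C', hC'0, hTrans⟩ := hP.transversality
    obtain ⟨C'', hDB⟩ := hP.transDerivBound
    have hm0R : (0:ℝ) < m := by exact_mod_cast hm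
    set C₂ : ℝ := max C'' 1 with hC₂def
    have hC₂1 : (1:ℝ) ≤ C₂ := le_max_right _ _
    have hC₂0 : (0:ℝ) < C₂ := lt_of_lt_of_le one_pos hC₂1
    have hC''le : C'' ≤ C₂ := le_max_left _ _
    obtain ⟨κ, hκ0, hκ1, hκ⟩ := exists_kappa hm hml hC'0 hC₂0.le
    set ε : ℝ := min (δ₀ / m) (κ / (2 * C₂ * (m:ℝ)^2)) with hεdef
    have hε0 : 0 < ε := lt_min (div_pos hδ₀ hm0R) (div_pos hκ0 (by positivity))
    have hεδ : (m:ℝ) * ε ≤ δ₀ := by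
      have h1 : ε ≤ δ₀ / m := min_le_left _ _
      calc (m:ℝ) * ε ≤ m * (δ₀ / m) := mul_le_mul_of_nonneg_left h1 hm0R.le
        _ = δ₀ := by field_simp
    set s₀ : ℝ := min C' (κ * ε / 4) with hs₀def
    have hs₀0 : 0 < s₀ := lt_min hC'0 (by positivity)
    set c : ℝ := C₂ + 1 + 4 * m / κ with hcdef
    have hc0 : 0 < c := by positivity
    have hC₂c : C₂ < c := by
      have h : 0 < 1 + 4 * (m:ℝ) / κ := by positivity
      rw [hcdef]; linarith
    have hc1 : 1 ≤ c := le_trans hC₂1 hC₂c.le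
    have hs₀δ₀ : s₀ ≤ δ₀ := by
      have h1 : s₀ ≤ κ * ε / 4 := min_le_right _ _
      have h2 : κ * ε / 4 ≤ ε := by
        have h2a : κ * ε ≤ 1 * ε := mul_le_mul_of_nonneg_right hκ1 hε0.le
        linarith
      have h3 : ε ≤ δ₀ / m := min_le_left _ _
      have hm1R : (1:ℝ) ≤ m := by exact_mod_cast hm
      have h4 : δ₀ / m ≤ δ₀ := by
        rw [div_le_iff₀ hm0R]
        nlinarith
      linarith
    refine ⟨c, hc0, s₀, hs₀0, fun lam hlam s hs0 hss₀ r hr => ?_⟩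
    have hlam2 : lam ∈ closedBall lam₀ (2*δ₀) :=
      closedBall_subset_closedBall (by linarith) hlam
    have hlamΛ : lam ∈ Λ := hball hlam2
    have hconv : Convex ℝ (closedBall lam₀ (2*δ₀)) := convex_closedBall _ _
    have hlamd : dist lam lam₀ ≤ δ₀ := hlam
    constructor
    · -- easy inclusion
      intro x hx
      simp only [Set.mem_iUnion] at hx
      obtain ⟨V, hV, hx⟩ := hx
      obtain ⟨⟨hxball, hL⟩, hxa0⟩ := hx
      obtain ⟨lam', hPeq, hlam's, -⟩ := hL
      have hxa : x ≠ a := fun h => hxa0 (by simp [h])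
      have hsub0 : (0:ℝ) < ‖x - a‖ := norm_pos_iff.2 (sub_ne_zero.2 hxa)
      refine ⟨?_, hxball⟩
      show ‖P x lam - P a lam‖ < s * ‖x - a‖
      have hTc2 : ContDiffOn ℝ 2 (transMap P x a) Λ :=
        ((hP.contDiffOn x).sub (hP.contDiffOn a)).const_smul _
      have hTlam' : transMap P x a lam' = 0 := by
        simp [transMap, hPeq]
      have hsc0 : 0 < s / c := div_pos hs0 hc0
      have hscδ : s / c ≤ δ₀ := by
        have h1 : s / c ≤ s := div_le_self hs0.le hc1
        linarith [hss₀.le.trans hs₀δ₀]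
      have hlam'2 : lam' ∈ closedBall lam₀ (2*δ₀) := by
        rw [mem_closedBall]
        calc dist lam' lam₀ ≤ dist lam' lam + dist lam lam₀ := dist_triangle _ _ _
          _ ≤ s / c + δ₀ := add_le_add (by rw [dist_eq_norm]; exact hlam's.le) hlamd
          _ ≤ 2 * δ₀ := by linarith
      have hmvt : ‖transMap P x a lam - transMap P x a lam'‖ ≤ C₂ * ‖lam - lam'‖ :=
        hconv.norm_image_sub_le_of_norm_hasFDerivWithin_le
          (fun ν hν => ((hTc2.differentiableOn (by norm_num)).differentiableAt
              (hP.isOpen.mem_nhds (hball hν))).hasFDerivAt.hasFDerivWithinAt)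
          (fun ν hν => ((hDB x a hxa ν (hball hν)).1).trans hC''le)
          hlam'2 hlam2
      have hTnorm : ‖transMap P x a lam‖ < s := by
        have h1 : ‖transMap P x a lam‖ ≤ C₂ * ‖lam - lam'‖ := by
          calc ‖transMap P x a lam‖ = ‖transMap P x a lam - transMap P x a lam'‖ := by
                rw [hTlam', sub_zero]
            _ ≤ C₂ * ‖lam - lam'‖ := hmvt
        have h2 : ‖lam - lam'‖ < s / c := by rw [norm_sub_rev]; exact hlam's
        calc ‖transMap P x a lam‖ ≤ C₂ * ‖lam - lam'‖ := h1
          _ < C₂ * (s / c) := mul_lt_mul_of_pos_left h2 hC₂0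
          _ ≤ c * (s / c) := mul_le_mul_of_nonneg_right hC₂c.le hsc0.le
          _ = s := by field_simp
      have heq : ‖P x lam - P a lam‖ = ‖x - a‖ * ‖transMap P x a lam‖ := by
        show ‖P x lam - P a lam‖ = ‖x - a‖ * ‖‖x - a‖⁻¹ • (P x lam - P a lam)‖
        rw [norm_smul, norm_inv, norm_norm]
        field_simp
      rw [heq, mul_comm s ‖x - a‖]
      exact mul_lt_mul_of_pos_left hTnorm hsub0
    · -- hard inclusion
      intro x hx
      obtain ⟨hxX, hxball⟩ := hx
      have hxlt : ‖P x lam - P a lam‖ < s * ‖x - a‖ := hxX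
      have hxa : x ≠ a := by
        rintro rfl
        simp at hxlt
      have hsub0 : (0:ℝ) < ‖x - a‖ := norm_pos_iff.2 (sub_ne_zero.2 hxa)
      have hTc2 : ContDiffOn ℝ 2 (transMap P x a) Λ :=
        ((hP.contDiffOn x).sub (hP.contDiffOn a)).const_smul _
      have hTdiff : ∀ ν ∈ closedBall lam₀ (2*δ₀), DifferentiableAt ℝ (transMap P x a) ν :=
        fun ν hν => (hTc2.differentiableOn (by norm_num)).differentiableAt
          (hP.isOpen.mem_nhds (hball hν))
      have hTlam : ‖transMap P x a lam‖ < s := by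
        have h1 : ‖transMap P x a lam‖ = ‖x - a‖⁻¹ * ‖P x lam - P a lam‖ := by
          show ‖‖x - a‖⁻¹ • (P x lam - P a lam)‖ = _
          rw [norm_smul, norm_inv, norm_norm]
        have h2 : ‖x - a‖⁻¹ * ‖P x lam - P a lam‖ < ‖x - a‖⁻¹ * (s * ‖x - a‖) :=
          mul_lt_mul_of_pos_left hxlt (by positivity)
        have h3 : ‖x - a‖⁻¹ * (s * ‖x - a‖) = s := by
          field_simp
        rw [h1]
        exact h2.trans_eq h3
      have hjac : C' ≤ jacobian (fderiv ℝ (transMap P x a) lam) :=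
        hTrans x a hxa lam hlamΛ (hTlam.le.trans (hss₀.le.trans (min_le_left _ _)))
      have hDn : ‖fderiv ℝ (transMap P x a) lam‖ ≤ C₂ :=
        ((hDB x a hxa lam hlamΛ).1).trans hC''le
      obtain ⟨f, hfA⟩ := hκ (fderiv ℝ (transMap P x a) lam) hDn hjac
      set T := transMap P x a with hT
      set D : Euc l →L[ℝ] Euc m := fderiv ℝ T lam with hD
      set emb := iotaF m l f with hemb
      set A : Euc m →L[ℝ] Euc m := D.comp emb with hA
      have hfA' : ∀ t : Euc m, κ * ‖t‖ ≤ ‖A t‖ := fun t => hfA t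
      set ρ : ℝ := 4 * s / κ with hρ
      have hρ0 : 0 < ρ := by positivity
      have hρε : ρ ≤ ε := by
        have h1 : s ≤ κ * ε / 4 := le_trans hss₀.le (min_le_right _ _)
        rw [hρ, div_le_iff₀ hκ0]
        linarith
      -- Lipschitz bound for fderiv T
      have hg1 : ContDiffOn ℝ 1 (fderiv ℝ T) Λ :=
        hTc2.fderiv_of_isOpen hP.isOpen (by norm_num)
      have hgdiff : ∀ ν ∈ closedBall lam₀ (2*δ₀), DifferentiableAt ℝ (fderiv ℝ T) ν :=
        fun ν hν => (hg1.differentiableOn (by norm_num)).differentiableAt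
          (hP.isOpen.mem_nhds (hball hν))
      have hsnd : ∀ ν ∈ closedBall lam₀ (2*δ₀), ‖fderiv ℝ (fderiv ℝ T) ν‖ ≤ C₂ := by
        intro ν hν
        have heq2 : ‖fderiv ℝ (fderiv ℝ T) ν‖ = ‖iteratedFDeriv ℝ 2 T ν‖ := by
          calc ‖fderiv ℝ (fderiv ℝ T) ν‖
              = ‖iteratedFDeriv ℝ 0 (fderiv ℝ (fderiv ℝ T)) ν‖ := by rw [norm_iteratedFDeriv_zero]
            _ = ‖iteratedFDeriv ℝ 1 (fderiv ℝ T) ν‖ := by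
                simpa using norm_iteratedFDeriv_fderiv (𝕜 := ℝ) (n := 0)
            _ = ‖iteratedFDeriv ℝ 2 T ν‖ := by
                simpa using norm_iteratedFDeriv_fderiv (𝕜 := ℝ) (n := 1)
        rw [heq2]
        exact ((hDB x a hxa ν (hball hν)).2).trans hC''le
      have hLip : ∀ ν ∈ closedBall lam₀ (2*δ₀), ‖fderiv ℝ T ν - D‖ ≤ C₂ * ‖ν - lam‖ :=
        fun ν hν => hconv.norm_image_sub_le_of_norm_hasFDerivWithin_le
          (fun μ hμ => (hgdiff μ hμ).hasFDerivAt.hasFDerivWithinAt) hsnd hlam2 hν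
      -- the map F
      set F : Euc m → Euc m := fun t => T (lam + emb t) with hF
      have hmemcb : ∀ τ : Euc m, τ ∈ closedBall (0 : Euc m) ρ →
          lam + emb τ ∈ closedBall lam₀ (2*δ₀) := by
        intro τ hτ
        have hτn : ‖τ‖ ≤ ρ := by simpa [mem_closedBall, dist_zero_right] using hτ
        rw [mem_closedBall, dist_eq_norm]
        have h1 : lam + emb τ - lam₀ = (lam - lam₀) + emb τ := by abel
        rw [h1]
        calc ‖(lam - lam₀) + emb τ‖ ≤ ‖lam - lam₀‖ + ‖emb τ‖ := norm_add_le _ _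
          _ ≤ δ₀ + m * ‖τ‖ := add_le_add (by rw [← dist_eq_norm]; exact hlamd)
              (norm_iotaF_apply_le f τ)
          _ ≤ δ₀ + m * ε := by
              have h2 : (m:ℝ) * ‖τ‖ ≤ m * ε :=
                mul_le_mul_of_nonneg_left (hτn.trans hρε) hm0R.le
              linarith
          _ ≤ δ₀ + δ₀ := by linarith
          _ = 2 * δ₀ := by ring
      have hFderiv : ∀ τ ∈ closedBall (0 : Euc m) ρ,
          HasFDerivAt F ((fderiv ℝ T (lam + emb τ)).comp emb) τ := by
        intro τ hτ
        have h1 : HasFDerivAt (fun t : Euc m => lam + emb t) emb τ :=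
          emb.hasFDerivAt.const_add lam
        have h2 : HasFDerivAt T (fderiv ℝ T (lam + emb τ)) (lam + emb τ) :=
          (hTdiff _ (hmemcb τ hτ)).hasFDerivAt
        exact h2.comp τ h1
      set c₁ : ℝ≥0 := Real.toNNReal (κ / 2) with hc₁
      have hc₁coe : (c₁ : ℝ) = κ / 2 := Real.coe_toNNReal _ (by positivity)
      have hconv2 : Convex ℝ (closedBall (0 : Euc m) ρ) := convex_closedBall _ _
      have happrox : ApproximatesLinearOn F A (closedBall (0 : Euc m) ρ) c₁ := by
        intro t ht u hu
        have hGder : ∀ τ ∈ closedBall (0 : Euc m) ρ,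
            HasFDerivWithinAt (fun τ' => F τ' - A τ')
              ((fderiv ℝ T (lam + emb τ)).comp emb - A) (closedBall (0 : Euc m) ρ) τ :=
          fun τ hτ => ((hFderiv τ hτ).sub A.hasFDerivAt).hasFDerivWithinAt
        have hGbound : ∀ τ ∈ closedBall (0 : Euc m) ρ,
            ‖(fderiv ℝ T (lam + emb τ)).comp emb - A‖ ≤ κ / 2 := by
          intro τ hτ
          have hτn : ‖τ‖ ≤ ρ := by simpa [mem_closedBall, dist_zero_right] using hτ
          have h1 : (fderiv ℝ T (lam + emb τ)).comp emb - A
              = (fderiv ℝ T (lam + emb τ) - D).comp emb :=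
            (ContinuousLinearMap.sub_comp _ _ _).symm
          rw [h1]
          have hdist : ‖lam + emb τ - lam‖ ≤ (m:ℝ) * ρ := by
            rw [add_sub_cancel_left]
            calc ‖emb τ‖ ≤ m * ‖τ‖ := norm_iotaF_apply_le f τ
              _ ≤ m * ρ := mul_le_mul_of_nonneg_left hτn hm0R.le
          have hρ2 : ρ ≤ κ / (2 * C₂ * (m:ℝ)^2) := hρε.trans (min_le_right _ _)
          have hρκ : 2 * C₂ * (m:ℝ)^2 * ρ ≤ κ := by
            rw [le_div_iff₀ (by positivity)] at hρ2
            linarith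
          calc ‖(fderiv ℝ T (lam + emb τ) - D).comp emb‖
              ≤ ‖fderiv ℝ T (lam + emb τ) - D‖ * ‖emb‖ :=
                ContinuousLinearMap.opNorm_comp_le _ _
            _ ≤ (C₂ * ‖lam + emb τ - lam‖) * m := by
                apply mul_le_mul (hLip _ (hmemcb τ hτ)) (norm_iotaF_le f) (norm_nonneg _)
                positivity
            _ ≤ (C₂ * ((m:ℝ) * ρ)) * m := by
                apply mul_le_mul_of_nonneg_right _ hm0R.le
                exact mul_le_mul_of_nonneg_left hdist hC₂0.le
            _ ≤ κ / 2 := by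
                have heq4 : (C₂ * ((m:ℝ) * ρ)) * m = C₂ * (m:ℝ)^2 * ρ := by ring
                rw [heq4]
                linarith
        have hmvt2 := hconv2.norm_image_sub_le_of_norm_hasFDerivWithin_le hGder hGbound hu ht
        have heq3 : F t - F u - A (t - u) = (F t - A t) - (F u - A u) := by
          rw [map_sub]; abel
        rw [heq3, hc₁coe]
        exact hmvt2
      -- right inverse of A
      have hAinj : Function.Injective A := by
        intro t u htu
        have h0 : A (t - u) = 0 := by rw [map_sub, htu, sub_self]
        have h1 := hfA' (t - u)
        rw [h0, norm_zero] at h1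
        have h2 : ‖t - u‖ = 0 := by
          have h1' : κ * ‖t - u‖ ≤ κ * 0 := by rwa [mul_zero]
          exact le_antisymm (le_of_mul_le_mul_left h1' hκ0) (norm_nonneg _)
        rw [norm_eq_zero] at h2
        exact sub_eq_zero.1 h2
      have hAbij : Function.Bijective (A : Euc m →ₗ[ℝ] Euc m) :=
        ⟨hAinj, LinearMap.injective_iff_surjective.1 hAinj⟩
      set eqv : Euc m ≃ₗ[ℝ] Euc m := LinearEquiv.ofBijective (A : Euc m →ₗ[ℝ] Euc m) hAbij
        with heqv
      have hAsymm : ∀ y, A (eqv.symm y) = y := fun y => eqv.apply_symm_apply y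
      set Ainv : ContinuousLinearMap.NonlinearRightInverse A :=
        { toFun := fun y => eqv.symm y
          nnnorm := Real.toNNReal κ⁻¹
          bound' := by
            intro y
            have h1 := hfA' (eqv.symm y)
            rw [hAsymm y] at h1
            have h2 : ‖eqv.symm y‖ ≤ κ⁻¹ * ‖y‖ := by
              rw [← div_eq_inv_mul, le_div_iff₀ hκ0]
              linarith [h1]
            calc ‖eqv.symm y‖ ≤ κ⁻¹ * ‖y‖ := h2
              _ = (Real.toNNReal κ⁻¹ : ℝ) * ‖y‖ := by
                  rw [Real.coe_toNNReal _ (by positivity)]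
          right_inv' := hAsymm } with hAinv
      have hsurj := happrox.surjOn_closedBall_of_nonlinearRightInverse Ainv hρ0.le
        (Set.Subset.refl _)
      have hnncoe : ((Ainv.nnnorm : ℝ≥0) : ℝ) = κ⁻¹ := Real.coe_toNNReal _ (by positivity)
      have hF0 : F 0 = T lam := by
        show T (lam + emb 0) = T lam
        rw [map_zero, add_zero]
      have h0mem : (0 : Euc m) ∈ closedBall (F 0) (((Ainv.nnnorm : ℝ)⁻¹ - (c₁ : ℝ)) * ρ) := by
        rw [mem_closedBall, dist_eq_norm, zero_sub, norm_neg, hF0]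
        have hrad : s ≤ ((Ainv.nnnorm : ℝ)⁻¹ - (c₁ : ℝ)) * ρ := by
          rw [hnncoe, inv_inv, hc₁coe, hρ]
          have h5 : (κ - κ/2) * (4*s/κ) = 2*s := by field_simp; ring
          rw [h5]
          linarith
        exact hTlam.le.trans hrad
      obtain ⟨t, htmem, hFt⟩ := hsurj h0mem
      have htn : ‖t‖ ≤ ρ := by simpa [mem_closedBall, dist_zero_right] using htmem
      obtain ⟨I, hIsub, hIcard⟩ := Finset.exists_superset_card_eq
        (s := Finset.image f Finset.univ) (n := m)
        ((Finset.card_image_le).trans (by simp)) (by simpa using hml)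
      refine Set.mem_iUnion₂.2 ⟨Submodule.span ℝ
        {v : Euc l | ∃ i ∈ I, v = EuclideanSpace.single i (1:ℝ)}, ⟨I, hIcard, rfl⟩,
        ⟨⟨hxball, ⟨lam + emb t, ?_, ?_, ?_⟩⟩, by simp [hxa]⟩⟩
      · -- P x (lam + emb t) = P a (lam + emb t)
        have hT0 : T (lam + emb t) = 0 := hFt
        have h3 : ‖x - a‖⁻¹ • (P x (lam + emb t) - P a (lam + emb t)) = 0 := hT0
        rcases smul_eq_zero.1 h3 with h4 | h4
        · exact absurd h4 (by positivity)
        · exact sub_eq_zero.1 h4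
      · -- norm bound
        rw [add_sub_cancel_left]
        calc ‖emb t‖ ≤ m * ‖t‖ := norm_iotaF_apply_le f t
          _ ≤ m * ρ := mul_le_mul_of_nonneg_left htn hm0R.le
          _ = (4 * m / κ) * s := by rw [hρ]; ring
          _ < c * s := by
              have hlt : 4 * (m:ℝ) / κ < c := by
                rw [hcdef]
                have : (0:ℝ) < C₂ + 1 := by positivity
                linarith
              exact mul_lt_mul_of_pos_right hlt hs0
      · rw [add_sub_cancel_left]
        exact iotaF_mem_span f
          (fun j => hIsub (Finset.mem_image_of_mem f (Finset.mem_univ j))) t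



end Slicing
end
end

section
/- Let (P_λ)_{λ∈Λ} be a transversal family and φ a Borel regular measure on ℝ^n. Let E ⊂ ℝ^n be φ-measurable with φ(E) < ∞, let δ > 0 and λ ∈ Λ, and define E_{2,δ}(λ) := { a ∈ ℝ^n : limsup_{s→0⁺} sup_{0<r<δ} (rs)^{-m} φ(E ∩ X(a,r,λ,s)) = ∞ }. Then the image P_λ(E_{2,δ}(λ)) is an L^m-null subset of ℝ^m. -/
open MeasureTheory Metric Set Filter
open scoped ENNReal NNReal Topology

noncomputable section

namespace Slicing

variable {n m l : ℕ}

/-- Proposition 3.10: the set where the cone density is infinite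
projects onto an `L^m`-null set. -/
theorem proj_null_of_infinite_cone_density
    {n m l : ℕ} (hn : 1 ≤ n) (hmn : m ≤ n) (hml : m ≤ l)
    (Λ : Set (Euc l)) (P : Euc n → Euc l → Euc m) (hP : IsTransversalFamily Λ P)
    (φ : Measure (Euc n)) (E : Set (Euc n)) (hEmeas : NullMeasurableSet E φ)
    (hfin : φ E < ∞) (δ : ℝ) (hδ : 0 < δ) (lam : Euc l) (hlam : lam ∈ Λ) :
    volume ((fun x => P x lam) '' {a : Euc n | coneDensity P φ E a lam δ = ⊤}) = 0 := by
  classical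
  set Q : Euc n → Euc m := fun x => P x lam with hQdef
  -- Q is continuous
  have hQcont : Continuous Q := by
    rw [continuous_iff_continuousAt]
    intro x
    have hopen : IsOpen ((Set.univ : Set (Euc n)) ×ˢ Λ) := isOpen_univ.prod hP.isOpen
    have hmem : (x, lam) ∈ (Set.univ : Set (Euc n)) ×ˢ Λ := ⟨Set.mem_univ _, hlam⟩
    have h1 : ContinuousAt (fun q : Euc n × Euc l => P q.1 q.2) (x, lam) :=
      hP.continuousOn.continuousAt (hopen.mem_nhds hmem)
    have h2 : Continuous fun x : Euc n => (x, lam) := continuous_id.prodMk continuous_const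
    have : ContinuousAt ((fun q : Euc n × Euc l => P q.1 q.2) ∘ fun x : Euc n => (x, lam)) x :=
      ContinuousAt.comp (f := fun x : Euc n => (x, lam)) h1 h2.continuousAt
    exact this
  have hQmeas : Measurable Q := hQcont.measurable
  haveI : IsFiniteMeasure (φ.restrict E) := by
    constructor
    rw [Measure.restrict_apply_univ]
    exact hfin
  set ν : Measure (Euc m) := (φ.restrict E).map Q with hνdef
  haveI : IsFiniteMeasure ν := by
    constructor
    rw [hνdef, Measure.map_apply hQmeas MeasurableSet.univ, Set.preimage_univ,
      Measure.restrict_apply_univ]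
    exact hfin
  set c : ℝ≥0∞ := volume (Metric.ball (0 : Euc m) 1) with hcdef
  have hc0 : c ≠ 0 := (measure_ball_pos volume 0 one_pos).ne'
  have hctop : c ≠ ⊤ := measure_ball_lt_top.ne
  -- Besicovitch differentiation + finiteness of rnDeriv a.e.
  have hae : ∀ᵐ y ∂(volume : Measure (Euc m)),
      Tendsto (fun r => ν (closedBall y r) / volume (closedBall y r)) (𝓝[>] 0)
        (𝓝 (ν.rnDeriv volume y)) ∧ ν.rnDeriv volume y < ⊤ :=
    (Besicovitch.ae_tendsto_rnDeriv ν volume).and (Measure.rnDeriv_lt_top ν volume)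
  refine measure_mono_null ?_ (ae_iff.1 hae)
  rintro y ⟨a, ha, rfl⟩
  simp only [Set.mem_setOf_eq] at ha ⊢
  rintro ⟨hT, hL⟩
  set L : ℝ≥0∞ := ν.rnDeriv volume (Q a) with hLdef
  -- eventually the density ratio is below L + 1
  have hev : ∀ᶠ ρ in 𝓝[>] (0 : ℝ),
      ν (closedBall (Q a) ρ) / volume (closedBall (Q a) ρ) < L + 1 :=
    hT.eventually_lt_const (ENNReal.lt_add_right hL.ne one_ne_zero)
  -- hence eventually the ratio against ρ^m is bounded
  have hev2 : ∀ᶠ ρ in 𝓝[>] (0 : ℝ),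
      ν (closedBall (Q a) ρ) / ENNReal.ofReal (ρ ^ m) ≤ (L + 1) * c := by
    filter_upwards [hev, self_mem_nhdsWithin] with ρ hρ hρpos
    have hρ0 : (0 : ℝ) < ρ := hρpos
    have hvol : volume (closedBall (Q a) ρ) = ENNReal.ofReal (ρ ^ m) * c := by
      rw [Measure.addHaar_closedBall volume (Q a) hρ0.le, finrank_euclideanSpace_fin]
    have key : ν (closedBall (Q a) ρ) / ENNReal.ofReal (ρ ^ m)
        = ν (closedBall (Q a) ρ) / volume (closedBall (Q a) ρ) * c := by
      rw [hvol, div_eq_mul_inv, div_eq_mul_inv, mul_right_comm, ← div_eq_mul_inv,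
        ← div_eq_mul_inv, ENNReal.mul_div_mul_right _ _ hc0 hctop]
    rw [key]
    exact mul_le_mul_left hρ.le c
  obtain ⟨t, ht, hsub⟩ := mem_nhdsGT_iff_exists_Ioo_subset.1 hev2
  have ht0 : (0 : ℝ) < t := ht
  set Gs : ℝ≥0∞ := ⨆ (ρ : ℝ) (_ : ρ ∈ Set.Ioo (0 : ℝ) t),
    ν (closedBall (Q a) ρ) / ENNReal.ofReal (ρ ^ m) with hGsdef
  have hGle : Gs ≤ (L + 1) * c := iSup₂_le fun ρ hρ => hsub hρ
  have hGtop : Gs = ⊤ := by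
    have hev3 : ∀ᶠ s in 𝓝[>] (0 : ℝ),
        (⨆ (r : ℝ) (_ : r ∈ Set.Ioo (0 : ℝ) δ),
          φ (E ∩ coneXr P a r lam s) / ENNReal.ofReal ((r * s) ^ m)) ≤ Gs := by
      filter_upwards [Ioo_mem_nhdsGT_of_mem ⟨le_refl (0 : ℝ), div_pos ht0 hδ⟩] with s hs
      refine iSup₂_le fun r hr => ?_
      have hrs0 : 0 < r * s := mul_pos hr.1 hs.1
      have hrst : r * s < t := by
        have h1 : r * s < δ * (t / δ) := mul_lt_mul'' hr.2 hs.2 hr.1.le hs.1.le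
        rwa [mul_div_cancel₀ t hδ.ne'] at h1
      have hstep : φ (E ∩ coneXr P a r lam s) ≤ ν (closedBall (Q a) (r * s)) := by
        rw [hνdef, Measure.map_apply hQmeas measurableSet_closedBall,
          Measure.restrict_apply (hQmeas measurableSet_closedBall)]
        refine measure_mono ?_
        rintro x ⟨hxE, hx1, hx2⟩
        refine ⟨?_, hxE⟩
        have hx1' : ‖Q x - Q a‖ < s * ‖x - a‖ := hx1
        have hx2' : dist x a ≤ r := hx2
        have : dist (Q x) (Q a) ≤ r * s := by
          rw [dist_eq_norm]
          calc ‖Q x - Q a‖ ≤ s * ‖x - a‖ := hx1'.le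
            _ = s * dist x a := by rw [dist_eq_norm]
            _ ≤ s * r := by exact mul_le_mul_of_nonneg_left hx2' hs.1.le
            _ = r * s := mul_comm s r
        exact mem_closedBall.2 this
      calc φ (E ∩ coneXr P a r lam s) / ENNReal.ofReal ((r * s) ^ m)
          ≤ ν (closedBall (Q a) (r * s)) / ENNReal.ofReal ((r * s) ^ m) :=
            ENNReal.div_le_div_right hstep _
        _ ≤ Gs := le_iSup₂_of_le (r * s) ⟨hrs0, hrst⟩ le_rfl
    have hle : coneDensity P φ E a lam δ ≤ Gs := by
      rw [coneDensity]
      exact Filter.limsup_le_of_le (by isBoundedDefault) hev3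
    rw [ha] at hle
    exact top_le_iff.1 hle
  have hne : (L + 1) * c ≠ ⊤ :=
    ENNReal.mul_ne_top (ENNReal.add_ne_top.2 ⟨hL.ne, ENNReal.one_ne_top⟩) hctop
  rw [hGtop] at hGle
  exact hne (top_le_iff.1 hGle)

end Slicing
end
end
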